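/- Let $V$ be a $\mathbb{Q}$-vector space equipped with pairwise commuting additive operators $E_0, \dots, E_{d-1}$, each locally nilpotent, and elements $x_0, \dots, x_{d-1}$ of a commutative ring acting on $V$ such that $E_i(x_j v) = \delta_{ij} v + x_j E_i(v)$ for all $i, j$ and $v \in V$. Then every $v \in V$ admits a finite expansion $v = \sum_{i_0, \dots, i_{d-1}} c_{i_0 \cdots i_{d-1}} x_0^{i_0} \cdots x_{d-1}^{i_{d-1}}$ with coefficients $c_{i_0 \cdots i_{d-1}}$ killed by all $E_0, \dots, E_{d-1}$. -/
import Mathlib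

theorem sum_piFinset_cons {M : Type*} [AddCommMonoid M] (d N : ℕ)
    (g : (Fin (d + 1) → ℕ) → M) :
    ∑ ι ∈ Fintype.piFinset (fun _ : Fin (d + 1) => Finset.range N), g ι
      = ∑ n ∈ Finset.range N, ∑ κ ∈ Fintype.piFinset (fun _ : Fin d => Finset.range N),
          g (Fin.cons n κ) := by
  rw [show (∑ n ∈ Finset.range N, ∑ κ ∈ Fintype.piFinset (fun _ : Fin d => Finset.range N),
        g (Fin.cons n κ))
      = ∑ p ∈ (Finset.range N) ×ˢ Fintype.piFinset (fun _ : Fin d => Finset.range N),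
        g (Fin.cons p.1 p.2) from (Finset.sum_product _ _ (fun p => g (Fin.cons p.1 p.2))).symm]
  apply Finset.sum_nbij' (i := fun ι => (ι 0, Fin.tail ι)) (j := fun p => Fin.cons p.1 p.2)
  · intro ι hι
    rw [Fintype.mem_piFinset] at hι
    rw [Finset.mem_product]
    exact ⟨hι 0, Fintype.mem_piFinset.2 fun j => hι j.succ⟩
  · intro p hp
    rw [Finset.mem_product] at hp
    rw [Fintype.mem_piFinset]
    intro j
    refine Fin.cases ?_ ?_ j
    · simpa using hp.1
    · intro j; simpa using Fintype.mem_piFinset.1 hp.2 j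
  · intro ι _; exact Fin.cons_self_tail ι
  · intro p _; simp [Fin.tail_cons]
  · intro ι _; rw [Fin.cons_self_tail]

section OneVar
variable (R : Type*) [CommRing R] [Algebra ℚ R]
    (V : Type*) [AddCommGroup V] [Module R V] [Module ℚ V] [IsScalarTower ℚ R V]

theorem one_var_expansion (E : V →+ V) (x : R)
    (hE : ∀ v : V, E (x • v) = v + x • E v) :
    ∀ (N : ℕ) (v : V), E^[N] v = 0 →
      ∃ c : ℕ → V, (∀ n, E (c n) = 0) ∧
        (∀ F : V →+ V, (∀ w, F (E w) = E (F w)) → (∀ w, F (x • w) = x • F w) →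
          F v = 0 → ∀ n, F (c n) = 0) ∧
        v = ∑ n ∈ Finset.range N, x ^ n • c n := by
  have hpow : ∀ (k : ℕ) (w : V), E w = 0 →
      E (x ^ (k + 1) • w) = ((k : ℚ) + 1) • (x ^ k • w) := by
    intro k
    induction k with
    | zero => intro w hw; simp [hE, hw]
    | succ k ih =>
      intro w hw
      have : x ^ (k + 1 + 1) • w = x • (x ^ (k + 1) • w) := by
        rw [← mul_smul, pow_succ, mul_comm]
      rw [this, hE, ih w hw, smul_comm x ((k : ℚ) + 1) (x ^ k • w), ← mul_smul,
        ← pow_succ']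
      push_cast
      module
  intro N
  induction N with
  | zero =>
    intro v hv
    refine ⟨0, by simp, by simp, ?_⟩
    simpa using hv
  | succ N ih =>
    intro v hv
    rw [Function.iterate_succ_apply] at hv
    obtain ⟨b, hbE, hbF, hbv⟩ := ih (E v) hv
    set c : ℕ → V := fun n =>
      Nat.rec (v - ∑ m ∈ Finset.range N, ((m : ℚ) + 1)⁻¹ • (x ^ (m + 1) • b m))
        (fun m _ => ((m : ℚ) + 1)⁻¹ • b m) n with hc
    have hc0 : c 0 = v - ∑ m ∈ Finset.range N, ((m : ℚ) + 1)⁻¹ • (x ^ (m + 1) • b m) := rfl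
    have hcs : ∀ m, c (m + 1) = ((m : ℚ) + 1)⁻¹ • b m := fun m => rfl
    have hne : ∀ m : ℕ, ((m : ℚ) + 1) ≠ 0 := fun m => by positivity
    refine ⟨c, ?_, ?_, ?_⟩
    · intro n
      cases n with
      | zero =>
        rw [hc0, map_sub, map_sum]
        rw [hbv]
        rw [sub_eq_zero]
        apply Finset.sum_congr rfl
        intro m hm
        rw [map_rat_smul, hpow m (b m) (hbE m), smul_smul, inv_mul_cancel₀ (hne m), one_smul]
      | succ m =>
        rw [hcs, map_rat_smul, hbE, smul_zero]
    · intro F hFE hFx hFv n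
      have hFb : ∀ m, F (b m) = 0 := by
        apply hbF F hFE hFx
        rw [hFE, hFv, map_zero]
      have hFxp : ∀ (k : ℕ) (w : V), F (x ^ k • w) = x ^ k • F w := by
        intro k
        induction k with
        | zero => simp
        | succ k ih =>
          intro w
          rw [pow_succ, mul_comm, mul_smul, hFx, ih, ← mul_smul, mul_comm, ← pow_succ]
      cases n with
      | zero =>
        rw [hc0, map_sub, hFv, map_sum, zero_sub, neg_eq_zero]
        apply Finset.sum_eq_zero
        intro m _
        rw [map_rat_smul, hFxp, hFb, smul_zero, smul_zero]
      | succ m => rw [hcs, map_rat_smul, hFb, smul_zero]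
    · rw [Finset.sum_range_succ']
      simp only [hcs, hc0, pow_zero, one_smul]
      have : ∀ m ∈ Finset.range N, x ^ (m + 1) • (((m : ℚ) + 1)⁻¹ • b m)
          = ((m : ℚ) + 1)⁻¹ • (x ^ (m + 1) • b m) := fun m _ => smul_comm _ _ _
      rw [Finset.sum_congr rfl this]
      abel

theorem multi_aux :
    ∀ (d : ℕ) (E : Fin d → (V →+ V)) (x : Fin d → R),
    (∀ i j, ∀ v : V, E i (E j v) = E j (E i v)) →
    (∀ i, ∀ v : V, ∃ N, (E i)^[N] v = 0) →
    (∀ i j, ∀ v : V, E i (x j • v) = (if i = j then v else 0) + x j • E i v) →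
    ∀ v : V, ∃ (N : ℕ) (c : (Fin d → ℕ) → V),
      (∀ ι, ∀ i, E i (c ι) = 0) ∧
      (∀ F : V →+ V, (∀ i w, F (E i w) = E i (F w)) →
        (∀ i w, F (x i • w) = x i • F w) → F v = 0 → ∀ ι, F (c ι) = 0) ∧
      v = ∑ ι ∈ Fintype.piFinset (fun _ : Fin d => Finset.range N),
            (∏ j, x j ^ ι j) • c ι := by
  intro d
  induction d with
  | zero =>
    intro E x _ _ _ v
    refine ⟨1, fun _ => v, fun ι i => i.elim0, fun F _ _ hFv ι => hFv, ?_⟩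
    have hpi : Fintype.piFinset (fun _ : Fin 0 => Finset.range 1)
        = {fun _ => 0} := by
      apply Finset.eq_singleton_iff_unique_mem.2
      refine ⟨Fintype.mem_piFinset.2 (fun i => i.elim0), ?_⟩
      intro ι _; funext i; exact i.elim0
    rw [hpi, Finset.sum_singleton]
    simp
  | succ d ih =>
    intro E x hcomm hnil hE v
    classical
    obtain ⟨N₀, hN₀⟩ := hnil 0 v
    obtain ⟨b, hbE, hbF, hbv⟩ := one_var_expansion R V (E 0) (x 0)
      (fun w => by simpa using hE 0 0 w) N₀ v hN₀
    have hE' : ∀ (i j : Fin d), ∀ w : V, E i.succ (x j.succ • w)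
        = (if i = j then w else 0) + x j.succ • E i.succ w := by
      intro i j w
      rw [hE i.succ j.succ w]
      by_cases h : i = j
      · subst h; simp
      · rw [if_neg h, if_neg (by simpa [Fin.succ_inj] using h)]
    choose Nf cc hccE hccF hccv using fun n =>
      ih (fun i => E i.succ) (fun i => x i.succ)
        (fun i j w => hcomm i.succ j.succ w)
        (fun i w => hnil i.succ w) hE' (b n)
    have hcc0 : ∀ n κ, E 0 (cc n κ) = 0 := by
      intro n κ
      refine hccF n (E 0) (fun i w => hcomm 0 i.succ w) ?_ (hbE n) κ
      intro i w
      have := hE 0 i.succ w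
      rwa [if_neg (Ne.symm (Fin.succ_ne_zero i)), zero_add] at this
    set M := max N₀ ((Finset.range N₀).sup Nf) with hM
    have hN₀M : N₀ ≤ M := le_max_left _ _
    have hNfM : ∀ n ∈ Finset.range N₀, Nf n ≤ M :=
      fun n hn => le_trans (Finset.le_sup hn) (le_max_right _ _)
    set c : (Fin (d + 1) → ℕ) → V := fun ι =>
      if ι 0 < N₀ ∧ Fin.tail ι ∈ Fintype.piFinset (fun _ : Fin d => Finset.range (Nf (ι 0)))
      then cc (ι 0) (Fin.tail ι) else 0 with hc
    have hcval : ∀ (n : ℕ) (κ : Fin d → ℕ), c (Fin.cons n κ)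
        = if n < N₀ ∧ κ ∈ Fintype.piFinset (fun _ : Fin d => Finset.range (Nf n))
          then cc n κ else 0 := by
      intro n κ
      simp only [hc, Fin.cons_zero, Fin.tail_cons]
    refine ⟨M, c, ?_, ?_, ?_⟩
    · intro ι i
      simp only [hc]
      split_ifs with h
      · refine Fin.cases ?_ ?_ i
        · exact hcc0 _ _
        · intro j; exact hccE _ _ j
      · exact map_zero _
    · intro F hFE hFx hFv ι
      simp only [hc]
      split_ifs with h
      · have hFb : ∀ n, F (b n) = 0 := fun n => hbF F (hFE 0) (hFx 0) hFv n
        exact hccF _ F (fun i w => hFE i.succ w) (fun i w => hFx i.succ w) (hFb _) _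
      · exact map_zero _
    · have key : ∀ n < N₀,
          ∑ κ ∈ Fintype.piFinset (fun _ : Fin d => Finset.range M),
            (∏ j : Fin (d + 1), x j ^ (Fin.cons n κ : Fin (d + 1) → ℕ) j) • c (Fin.cons n κ)
          = x 0 ^ n • b n := by
        intro n hn
        have hsub : Fintype.piFinset (fun _ : Fin d => Finset.range (Nf n))
            ⊆ Fintype.piFinset (fun _ : Fin d => Finset.range M) :=
          Fintype.piFinset_subset _ _
            (fun _ => Finset.range_subset_range.2 (hNfM n (Finset.mem_range.2 hn)))
        rw [← Finset.sum_subset hsub ?_]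
        · rw [hccv n, Finset.smul_sum]
          apply Finset.sum_congr rfl
          intro κ hκ
          rw [hcval, if_pos ⟨hn, hκ⟩, Fin.prod_univ_succ]
          simp only [Fin.cons_zero, Fin.cons_succ]
          rw [mul_smul]
        · intro κ _ hκ
          rw [hcval, if_neg (fun h => hκ h.2), smul_zero]
      have hzero : ∀ n ∈ Finset.range M, n ∉ Finset.range N₀ →
          ∑ κ ∈ Fintype.piFinset (fun _ : Fin d => Finset.range M),
            (∏ j : Fin (d + 1), x j ^ (Fin.cons n κ : Fin (d + 1) → ℕ) j) • c (Fin.cons n κ)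
          = 0 := by
        intro n _ hn
        apply Finset.sum_eq_zero
        intro κ _
        rw [hcval, if_neg (fun h => hn (Finset.mem_range.2 h.1)), smul_zero]
      calc v = ∑ n ∈ Finset.range N₀, x 0 ^ n • b n := hbv
        _ = ∑ n ∈ Finset.range N₀,
              ∑ κ ∈ Fintype.piFinset (fun _ : Fin d => Finset.range M),
                (∏ j : Fin (d + 1), x j ^ (Fin.cons n κ : Fin (d + 1) → ℕ) j) •
                  c (Fin.cons n κ) :=
          Finset.sum_congr rfl (fun n hn => (key n (Finset.mem_range.1 hn)).symm)
        _ = ∑ n ∈ Finset.range M,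
              ∑ κ ∈ Fintype.piFinset (fun _ : Fin d => Finset.range M),
                (∏ j : Fin (d + 1), x j ^ (Fin.cons n κ : Fin (d + 1) → ℕ) j) •
                  c (Fin.cons n κ) :=
          Finset.sum_subset (Finset.range_subset_range.2 hN₀M) hzero
        _ = _ := (sum_piFinset_cons d M (fun ι => (∏ j, x j ^ ι j) • c ι)).symm

end OneVar

/-- Multivariable expansion: if `V` is a module over a commutative `ℚ`-algebra `R`
equipped with pairwise commuting, locally nilpotent additive operators `E₀,…,E_{d-1}`
and elements `x₀,…,x_{d-1} ∈ R` with `E i (x j • v) = δ_{ij} v + x j • E i v`, then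
every `v` has a finite expansion `v = ∑ c_{i₀…i_{d-1}} x₀^{i₀} ⋯ x_{d-1}^{i_{d-1}}`
with all coefficients killed by every `E i`. -/

theorem multivariable_expansion
    (R : Type*) [CommRing R] [Algebra ℚ R]
    (V : Type*) [AddCommGroup V] [Module R V] [Module ℚ V] [IsScalarTower ℚ R V]
    (d : ℕ) (E : Fin d → (V →+ V)) (x : Fin d → R)
    (hcomm : ∀ i j, ∀ v : V, E i (E j v) = E j (E i v))
    (hnil : ∀ i, ∀ v : V, ∃ N, (E i)^[N] v = 0)
    (hE : ∀ i j, ∀ v : V, E i (x j • v) = (if i = j then v else 0) + x j • E i v)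
    (v : V) :
    ∃ (N : ℕ) (c : (Fin d → ℕ) → V),
      (∀ ι, ∀ i, E i (c ι) = 0) ∧
      v = ∑ ι ∈ Fintype.piFinset (fun _ : Fin d => Finset.range N),
            (∏ j, x j ^ ι j) • c ι := by
  obtain ⟨N, c, h1, _, h3⟩ := multi_aux R V d E x hcomm hnil hE v
  exact ⟨N, c, h1, h3⟩
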